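/- Let C be the subgroup of U(8,ℂ) generated by {X₁, CX₁₂, CX₂₁}, Q the subgroup generated by {X₀, CX₁₀, CX₂₀, CCX₀}, and CQ the subgroup generated by the union of these two generating sets. Then Q is a normal subgroup of CQ, and the multiplication map C × Q → CQ, (c,q) ↦ c·q, is a bijection; i.e., CQ is the internal semidirect product C ⋉ Q. -/

import Mathlib

noncomputable section
open Matrix Complex

abbrev M8 := Matrix (Fin 8) (Fin 8) ℂ
abbrev U8 := Matrix.unitaryGroup (Fin 8) ℂ

namespace CCS

/-- qubit 0 (most significant bit) of a basis index. -/
def b0 (m : Fin 8) : ℕ := m.val / 4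
def b1 (m : Fin 8) : ℕ := m.val / 2 % 2
def b2 (m : Fin 8) : ℕ := m.val % 2

/-- basis index with qubit values `a`, `b`, `c` (mod 2). -/
def idx (a b c : ℕ) : Fin 8 := ⟨4 * (a % 2) + 2 * (b % 2) + c % 2, by omega⟩

/-- the permutation matrix sending `e_s` to `e_{σ s}`. -/
def permMat (σ : Fin 8 → Fin 8) : M8 := fun r s => if r = σ s then 1 else 0

def q0 (m : Fin 8) : Fin 2 := ⟨b0 m, by simp [b0]; omega⟩
def q1 (m : Fin 8) : Fin 2 := ⟨b1 m, by simp [b1]; omega⟩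
def q2 (m : Fin 8) : Fin 2 := ⟨b2 m, by simp [b2]; omega⟩

def Kmat : Matrix (Fin 2) (Fin 2) ℂ := (1 / (1 + I)) • !![1, 1; 1, -1]
def Smat : Matrix (Fin 2) (Fin 2) ℂ := !![1, 0; 0, I]

/-- `A ⊗ I₂ ⊗ I₂` -/
def K0 : M8 := fun r s => Kmat (q0 r) (q0 s) * (if q1 r = q1 s ∧ q2 r = q2 s then 1 else 0)
def K1 : M8 := fun r s => Kmat (q1 r) (q1 s) * (if q0 r = q0 s ∧ q2 r = q2 s then 1 else 0)
def K2 : M8 := fun r s => Kmat (q2 r) (q2 s) * (if q0 r = q0 s ∧ q1 r = q1 s then 1 else 0)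

def omega8 : M8 := Matrix.diagonal fun _ => I
def S0 : M8 := Matrix.diagonal fun m => I ^ b0 m
def S1 : M8 := Matrix.diagonal fun m => I ^ b1 m
def S2 : M8 := Matrix.diagonal fun m => I ^ b2 m
def CS01 : M8 := Matrix.diagonal fun m => I ^ (b0 m * b1 m)
def CS12 : M8 := Matrix.diagonal fun m => I ^ (b1 m * b2 m)
def CS02 : M8 := Matrix.diagonal fun m => I ^ (b0 m * b2 m)
def CCZ : M8 := Matrix.diagonal fun m => (-1 : ℂ) ^ (b0 m * b1 m * b2 m)

def X0 : M8 := permMat fun m => idx (b0 m + 1) (b1 m) (b2 m)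
def X1 : M8 := permMat fun m => idx (b0 m) (b1 m + 1) (b2 m)
def X2 : M8 := permMat fun m => idx (b0 m) (b1 m) (b2 m + 1)
def CX01 : M8 := permMat fun m => idx (b0 m) (b1 m + b0 m) (b2 m)
def CX10 : M8 := permMat fun m => idx (b0 m + b1 m) (b1 m) (b2 m)
def CX12 : M8 := permMat fun m => idx (b0 m) (b1 m) (b2 m + b1 m)
def CX21 : M8 := permMat fun m => idx (b0 m) (b1 m + b2 m) (b2 m)
def CX02 : M8 := permMat fun m => idx (b0 m) (b1 m) (b2 m + b0 m)
def CX20 : M8 := permMat fun m => idx (b0 m + b2 m) (b1 m) (b2 m)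
def CCX0 : M8 := permMat fun m => idx (b0 m + b1 m * b2 m) (b1 m) (b2 m)
def Swap01 : M8 := permMat fun m => idx (b1 m) (b0 m) (b2 m)
def Swap12 : M8 := permMat fun m => idx (b0 m) (b2 m) (b1 m)

/-- The ring ℤ[1/2, i]. -/
def Zhi : Subring ℂ := Subring.closure {1 / 2, I}

/-- The 3-qubit Clifford+CS group, as a subgroup of U(8,ℂ). -/
def CliffordCS3 : Subgroup U8 :=
  Subgroup.closure {u : U8 | (u : M8) ∈ ({omega8, K0, K1, K2, S0, S1, S2, CS01, CS12} : Set M8)}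

end CCS

noncomputable section
open CCS

/-- The subgroup `C = ⟨X₁, CX₁₂, CX₂₁⟩` of U(8,ℂ). -/
def Cgrp : Subgroup U8 :=
  Subgroup.closure {u : U8 | (u : M8) ∈ ({X1, CX12, CX21} : Set M8)}

/-- The subgroup `Q = ⟨X₀, CX₁₀, CX₂₀, CCX₀⟩` of U(8,ℂ). -/
def Qgrp : Subgroup U8 :=
  Subgroup.closure {u : U8 | (u : M8) ∈ ({X0, CX10, CX20, CCX0} : Set M8)}

/-- The subgroup `CQ` generated by the union of the generating sets of `C` and `Q`. -/
def CQgrp : Subgroup U8 :=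
  Subgroup.closure {u : U8 | (u : M8) ∈
    ({X1, CX12, CX21} ∪ {X0, CX10, CX20, CCX0} : Set M8)}


namespace CCS

def mkInv (f : Fin 8 → Fin 8) (h : ∀ m, f (f m) = m) : Equiv.Perm (Fin 8) := ⟨f, f, h, h⟩

def x1p : Equiv.Perm (Fin 8) := mkInv (fun m => idx (b0 m) (b1 m + 1) (b2 m)) (by decide)
def cx12p : Equiv.Perm (Fin 8) := mkInv (fun m => idx (b0 m) (b1 m) (b2 m + b1 m)) (by decide)
def cx21p : Equiv.Perm (Fin 8) := mkInv (fun m => idx (b0 m) (b1 m + b2 m) (b2 m)) (by decide)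
def x0p : Equiv.Perm (Fin 8) := mkInv (fun m => idx (b0 m + 1) (b1 m) (b2 m)) (by decide)
def cx10p : Equiv.Perm (Fin 8) := mkInv (fun m => idx (b0 m + b1 m) (b1 m) (b2 m)) (by decide)
def cx20p : Equiv.Perm (Fin 8) := mkInv (fun m => idx (b0 m + b2 m) (b1 m) (b2 m)) (by decide)
def ccx0p : Equiv.Perm (Fin 8) := mkInv (fun m => idx (b0 m + b1 m * b2 m) (b1 m) (b2 m)) (by decide)

lemma permMat_comp (f g : Fin 8 → Fin 8) : permMat f * permMat g = permMat (f ∘ g) := by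
  ext r s
  rw [Matrix.mul_apply]
  simp only [permMat, Function.comp_apply]
  rw [Finset.sum_eq_single (g s)]
  · simp
  · intro t _ ht; simp [ht]
  · simp

lemma permMat_id : permMat id = 1 := by
  ext r s; simp [permMat, Matrix.one_apply, eq_comm]

lemma permMat_star (σ : Equiv.Perm (Fin 8)) : star (permMat ⇑σ) = permMat ⇑σ⁻¹ := by
  ext r s
  simp only [Matrix.star_apply, permMat, apply_ite (star : ℂ → ℂ), star_one, star_zero]
  congr 1
  simp [eq_comm, Equiv.eq_symm_apply, Equiv.Perm.inv_def]

def phi : Equiv.Perm (Fin 8) →* U8 where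
  toFun σ := ⟨permMat ⇑σ, Matrix.mem_unitaryGroup_iff.mpr (by
    rw [permMat_star, permMat_comp, show ⇑σ ∘ ⇑σ⁻¹ = id from funext fun m => σ.apply_symm_apply m]
    exact permMat_id)⟩
  map_one' := Subtype.ext (by
    show permMat _ = _
    rw [show ⇑(1 : Equiv.Perm (Fin 8)) = id from rfl]; exact permMat_id)
  map_mul' σ τ := Subtype.ext (show permMat ⇑(σ * τ) = permMat ⇑σ * permMat ⇑τ by
    rw [permMat_comp]; rfl)

lemma phi_inj : Function.Injective phi := by
  intro σ τ h
  apply Equiv.ext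
  intro s
  by_contra hne
  have h2 := congrArg (fun u : U8 => (u : M8) (σ s) s) h
  simp only [phi, MonoidHom.coe_mk, OneHom.coe_mk, permMat] at h2
  rw [if_pos trivial, if_neg hne] at h2
  exact one_ne_zero h2

/-- The subgroup of permutations corresponding to `C`. -/
def Cp : Subgroup (Equiv.Perm (Fin 8)) := Subgroup.closure {x1p, cx12p, cx21p}
/-- The subgroup of permutations corresponding to `Q`. -/
def Qp : Subgroup (Equiv.Perm (Fin 8)) := Subgroup.closure {x0p, cx10p, cx20p, ccx0p}
/-- The subgroup of permutations corresponding to `CQ`. -/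
def CQp : Subgroup (Equiv.Perm (Fin 8)) :=
  Subgroup.closure {x1p, cx12p, cx21p, x0p, cx10p, cx20p, ccx0p}

lemma Cp_le_CQp : Cp ≤ CQp := by
  apply Subgroup.closure_mono
  intro x hx
  simp only [Set.mem_insert_iff, Set.mem_singleton_iff] at *
  tauto

lemma Qp_le_CQp : Qp ≤ CQp := by
  apply Subgroup.closure_mono
  intro x hx
  simp only [Set.mem_insert_iff, Set.mem_singleton_iff] at *
  tauto

lemma pres_closure {S : Set (Equiv.Perm (Fin 8))} {f : Fin 8 → ℕ}
    (hS : ∀ σ ∈ S, ∀ m, f (σ m) = f m) :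
    ∀ σ ∈ Subgroup.closure S, ∀ m, f (σ m) = f m := by
  intro σ hσ
  refine Subgroup.closure_induction (p := fun σ _ => ∀ m, f (σ m) = f m) hS ?_ ?_ ?_ hσ
  · intro m; rfl
  · intro x y _ _ px py m
    rw [Equiv.Perm.mul_apply, px, py]
  · intro x _ px m
    have h := px (x⁻¹ m)
    rw [show x (x⁻¹ m) = m from x.apply_symm_apply m] at h
    exact h.symm

lemma b0_Cp : ∀ σ ∈ Cp, ∀ m, b0 (σ m) = b0 m :=
  pres_closure (by rintro σ (rfl | rfl | rfl) <;> decide)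

lemma b1_Qp : ∀ σ ∈ Qp, ∀ m, b1 (σ m) = b1 m :=
  pres_closure (by rintro σ (rfl | rfl | rfl | rfl) <;> decide)

lemma b2_Qp : ∀ σ ∈ Qp, ∀ m, b2 (σ m) = b2 m :=
  pres_closure (by rintro σ (rfl | rfl | rfl | rfl) <;> decide)

lemma fin8_ext : ∀ x y : Fin 8, b0 x = b0 y → b1 x = b1 y → b2 x = b2 y → x = y := by decide

lemma Cp_inf_Qp : ∀ σ, σ ∈ Cp → σ ∈ Qp → σ = 1 := by
  intro σ hc hq
  apply Equiv.ext
  intro m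
  exact fin8_ext _ _ (b0_Cp σ hc m) (b1_Qp σ hq m) (b2_Qp σ hq m)

lemma hx0Q : x0p ∈ Qp := Subgroup.subset_closure (by simp)
lemma hcx10Q : cx10p ∈ Qp := Subgroup.subset_closure (by simp)
lemma hcx20Q : cx20p ∈ Qp := Subgroup.subset_closure (by simp)
lemma hccx0Q : ccx0p ∈ Qp := Subgroup.subset_closure (by simp)

lemma memOf {a b : Equiv.Perm (Fin 8)} (h : a = b) (hb : b ∈ Qp) : a ∈ Qp := h ▸ hb

lemma conj_gen :
    ∀ g ∈ ({x1p, cx12p, cx21p, x0p, cx10p, cx20p, ccx0p} : Set (Equiv.Perm (Fin 8))),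
    ∀ q ∈ ({x0p, cx10p, cx20p, ccx0p} : Set (Equiv.Perm (Fin 8))),
      g * q * g⁻¹ ∈ Qp := by
  rintro g (rfl | rfl | rfl | rfl | rfl | rfl | rfl) q (rfl | rfl | rfl | rfl)
  all_goals first
    | exact memOf (Equiv.ext (by decide)) hx0Q
    | exact memOf (Equiv.ext (by decide)) hcx10Q
    | exact memOf (Equiv.ext (by decide)) hcx20Q
    | exact memOf (Equiv.ext (by decide)) hccx0Q
    | exact memOf (Equiv.ext (by decide)) (mul_mem hx0Q hcx10Q)
    | exact memOf (Equiv.ext (by decide)) (mul_mem hccx0Q hcx20Q)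
    | exact memOf (Equiv.ext (by decide)) (mul_mem hcx20Q hcx10Q)
    | exact memOf (Equiv.ext (by decide)) (mul_mem hccx0Q hcx10Q)

lemma normQ : ∀ g ∈ CQp, ∀ q ∈ Qp, g * q * g⁻¹ ∈ Qp := by
  intro g hg
  refine (Subgroup.closure_induction
    (p := fun g _ => (∀ q ∈ Qp, g * q * g⁻¹ ∈ Qp) ∧ (∀ q ∈ Qp, g⁻¹ * q * g ∈ Qp))
    ?_ ?_ ?_ ?_ hg).1
  · intro x hx
    have hxinv : x⁻¹ = x := by
      rcases hx with rfl | rfl | rfl | rfl | rfl | rfl | rfl <;> exact Equiv.ext (by decide)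
    have main : ∀ q ∈ Qp, x * q * x⁻¹ ∈ Qp := by
      intro q hq
      refine Subgroup.closure_induction (p := fun q _ => x * q * x⁻¹ ∈ Qp) ?_ ?_ ?_ ?_ hq
      · intro a ha; exact conj_gen x hx a ha
      · simpa using one_mem Qp
      · intro a b _ _ ha hb
        rw [show x * (a * b) * x⁻¹ = (x * a * x⁻¹) * (x * b * x⁻¹) by group]
        exact mul_mem ha hb
      · intro a _ ha
        rw [show x * a⁻¹ * x⁻¹ = (x * a * x⁻¹)⁻¹ by group]
        exact inv_mem ha
    refine ⟨main, fun q hq => ?_⟩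
    have h := main q hq
    rw [hxinv] at h ⊢
    exact h
  · exact ⟨fun q hq => by simpa using hq, fun q hq => by simpa using hq⟩
  · rintro x y _ _ ⟨px, px'⟩ ⟨py, py'⟩
    constructor
    · intro q hq
      rw [show x * y * q * (x * y)⁻¹ = x * (y * q * y⁻¹) * x⁻¹ by group]
      exact px _ (py q hq)
    · intro q hq
      rw [show (x * y)⁻¹ * q * (x * y) = y⁻¹ * (x⁻¹ * q * x) * y by group]
      exact py' _ (px' q hq)
  · rintro x _ ⟨px, px'⟩
    refine ⟨fun q hq => ?_, fun q hq => ?_⟩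
    · rw [inv_inv]; exact px' q hq
    · rw [inv_inv]; exact px q hq

lemma decomp : ∀ g ∈ CQp, ∃ c ∈ Cp, ∃ q ∈ Qp, g = c * q := by
  intro g hg
  refine Subgroup.closure_induction (p := fun g _ => ∃ c ∈ Cp, ∃ q ∈ Qp, g = c * q)
    ?_ ?_ ?_ ?_ hg
  · rintro x (rfl | rfl | rfl | rfl | rfl | rfl | rfl)
    · exact ⟨x1p, Subgroup.subset_closure (by simp), 1, one_mem _, (mul_one _).symm⟩
    · exact ⟨cx12p, Subgroup.subset_closure (by simp), 1, one_mem _, (mul_one _).symm⟩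
    · exact ⟨cx21p, Subgroup.subset_closure (by simp), 1, one_mem _, (mul_one _).symm⟩
    · exact ⟨1, one_mem _, x0p, hx0Q, (one_mul _).symm⟩
    · exact ⟨1, one_mem _, cx10p, hcx10Q, (one_mul _).symm⟩
    · exact ⟨1, one_mem _, cx20p, hcx20Q, (one_mul _).symm⟩
    · exact ⟨1, one_mem _, ccx0p, hccx0Q, (one_mul _).symm⟩
  · exact ⟨1, one_mem _, 1, one_mem _, (one_mul _).symm⟩
  · rintro x y _ _ ⟨c1, hc1, q1, hq1, rfl⟩ ⟨c2, hc2, q2, hq2, rfl⟩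
    have hq' : c2⁻¹ * q1 * c2 ∈ Qp := by
      have h := normQ c2⁻¹ (inv_mem (Cp_le_CQp hc2)) q1 hq1
      rwa [inv_inv] at h
    exact ⟨c1 * c2, mul_mem hc1 hc2, (c2⁻¹ * q1 * c2) * q2, mul_mem hq' hq2, by group⟩
  · rintro x _ ⟨c, hc, q, hq, rfl⟩
    have hq' : c * q⁻¹ * c⁻¹ ∈ Qp := normQ c (Cp_le_CQp hc) q⁻¹ (inv_mem hq)
    exact ⟨c⁻¹, inv_mem hc, c * q⁻¹ * c⁻¹, hq', by group⟩

end CCS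

lemma Cgrp_eq : Cgrp = Subgroup.map phi Cp := by
  rw [Cgrp, Cp, MonoidHom.map_closure]
  congr 1
  ext u
  simp only [Set.mem_setOf_eq, Set.mem_insert_iff, Set.mem_singleton_iff, Set.mem_image]
  constructor
  · rintro (h | h | h)
    · exact ⟨x1p, Or.inl rfl, Subtype.ext h.symm⟩
    · exact ⟨cx12p, Or.inr (Or.inl rfl), Subtype.ext h.symm⟩
    · exact ⟨cx21p, Or.inr (Or.inr rfl), Subtype.ext h.symm⟩
  · rintro ⟨σ, (rfl | rfl | rfl), rfl⟩
    · exact Or.inl rfl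
    · exact Or.inr (Or.inl rfl)
    · exact Or.inr (Or.inr rfl)

lemma Qgrp_eq : Qgrp = Subgroup.map phi Qp := by
  rw [Qgrp, Qp, MonoidHom.map_closure]
  congr 1
  ext u
  simp only [Set.mem_setOf_eq, Set.mem_insert_iff, Set.mem_singleton_iff, Set.mem_image]
  constructor
  · rintro (h | h | h | h)
    · exact ⟨x0p, Or.inl rfl, Subtype.ext h.symm⟩
    · exact ⟨cx10p, Or.inr (Or.inl rfl), Subtype.ext h.symm⟩
    · exact ⟨cx20p, Or.inr (Or.inr (Or.inl rfl)), Subtype.ext h.symm⟩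
    · exact ⟨ccx0p, Or.inr (Or.inr (Or.inr rfl)), Subtype.ext h.symm⟩
  · rintro ⟨σ, (rfl | rfl | rfl | rfl), rfl⟩
    · exact Or.inl rfl
    · exact Or.inr (Or.inl rfl)
    · exact Or.inr (Or.inr (Or.inl rfl))
    · exact Or.inr (Or.inr (Or.inr rfl))

lemma CQgrp_eq : CQgrp = Subgroup.map phi CQp := by
  rw [CQgrp, CQp, MonoidHom.map_closure]
  congr 1
  ext u
  simp only [Set.mem_setOf_eq, Set.mem_union, Set.mem_insert_iff, Set.mem_singleton_iff,
    Set.mem_image]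
  constructor
  · rintro ((h | h | h) | (h | h | h | h))
    · exact ⟨x1p, by tauto, Subtype.ext h.symm⟩
    · exact ⟨cx12p, by tauto, Subtype.ext h.symm⟩
    · exact ⟨cx21p, by tauto, Subtype.ext h.symm⟩
    · exact ⟨x0p, by tauto, Subtype.ext h.symm⟩
    · exact ⟨cx10p, by tauto, Subtype.ext h.symm⟩
    · exact ⟨cx20p, by tauto, Subtype.ext h.symm⟩
    · exact ⟨ccx0p, by tauto, Subtype.ext h.symm⟩
  · rintro ⟨σ, (rfl | rfl | rfl | rfl | rfl | rfl | rfl), rfl⟩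
    · exact Or.inl (Or.inl rfl)
    · exact Or.inl (Or.inr (Or.inl rfl))
    · exact Or.inl (Or.inr (Or.inr rfl))
    · exact Or.inr (Or.inl rfl)
    · exact Or.inr (Or.inr (Or.inl rfl))
    · exact Or.inr (Or.inr (Or.inr (Or.inl rfl)))
    · exact Or.inr (Or.inr (Or.inr (Or.inr rfl)))

lemma key_conj : ∀ u ∈ CQgrp, ∀ v ∈ Qgrp, u * v * u⁻¹ ∈ Qgrp := by
  rw [CQgrp_eq, Qgrp_eq]
  rintro u hu v hv
  obtain ⟨gu, hgu, rfl⟩ := hu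
  obtain ⟨gv, hgv, rfl⟩ := hv
  exact ⟨gu * gv * gu⁻¹, normQ gu hgu gv hgv, by rw [_root_.map_mul, _root_.map_mul, map_inv]⟩

/-- `Q` is normal in `CQ` and multiplication `C × Q → CQ` is a bijection, i.e. `CQ` is the
internal semidirect product `C ⋉ Q`. -/
theorem CQ_semidirect :
    Qgrp ≤ CQgrp ∧ (Qgrp.subgroupOf CQgrp).Normal ∧
    Function.Injective (fun p : Cgrp × Qgrp => (p.1 : U8) * (p.2 : U8)) ∧
    Set.range (fun p : Cgrp × Qgrp => (p.1 : U8) * (p.2 : U8)) = (CQgrp : Set U8) := by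
  have hQle : Qgrp ≤ CQgrp := Subgroup.closure_mono (fun u hu => Or.inr hu)
  have hCle : Cgrp ≤ CQgrp := Subgroup.closure_mono (fun u hu => Or.inl hu)
  refine ⟨hQle, ?_, ?_, ?_⟩
  · constructor
    intro q hq g
    rw [Subgroup.mem_subgroupOf] at hq ⊢
    simpa using key_conj ↑g g.2 ↑q hq
  · rintro ⟨⟨c1, hc1⟩, ⟨q1, hq1⟩⟩ ⟨⟨c2, hc2⟩, ⟨q2, hq2⟩⟩ h
    simp only at h
    have h2 : (c2 : U8)⁻¹ * c1 = (q2 : U8) * q1⁻¹ := by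
      calc (c2 : U8)⁻¹ * c1 = c2⁻¹ * (c1 * q1) * q1⁻¹ := by group
        _ = c2⁻¹ * ((c2 : U8) * q2) * q1⁻¹ := by rw [h]
        _ = q2 * q1⁻¹ := by group
    have huC : (c2 : U8)⁻¹ * c1 ∈ Cgrp := mul_mem (inv_mem hc2) hc1
    have huQ : (c2 : U8)⁻¹ * c1 ∈ Qgrp := h2 ▸ mul_mem hq2 (inv_mem hq1)
    rw [Cgrp_eq] at huC
    rw [Qgrp_eq] at huQ
    obtain ⟨a, ha, hae⟩ := huC
    obtain ⟨b, hb, hbe⟩ := huQ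
    have hab : a = b := phi_inj (hae.trans hbe.symm)
    have ha1 : a = 1 := Cp_inf_Qp a ha (hab ▸ hb)
    have hu1 : (c2 : U8)⁻¹ * c1 = 1 := by rw [← hae, ha1, _root_.map_one]
    have hc : c1 = c2 := (inv_mul_eq_one.mp hu1).symm
    have hqe : q1 = q2 := by
      apply mul_left_cancel (a := (c1 : U8))
      rw [h, hc]
    simp only [Prod.mk.injEq, Subtype.mk.injEq]
    exact ⟨hc, hqe⟩
  · ext u
    simp only [Set.mem_range, SetLike.mem_coe]
    constructor
    · rintro ⟨⟨c, q⟩, rfl⟩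
      exact mul_mem (hCle c.2) (hQle q.2)
    · intro hu
      rw [CQgrp_eq] at hu
      obtain ⟨g, hg, rfl⟩ := hu
      obtain ⟨c, hc, q, hq, rfl⟩ := decomp g hg
      refine ⟨(⟨phi c, ?_⟩, ⟨phi q, ?_⟩), ?_⟩
      · rw [Cgrp_eq]; exact ⟨c, hc, rfl⟩
      · rw [Qgrp_eq]; exact ⟨q, hq, rfl⟩
      · exact (map_mul phi c q).symm
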